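/- Let λ_j, λ_m > 0 and let 0 < κ ≤ 1 be real numbers. Then ∫_{r=0}^{∞} ∫_{u=r}^{∞} 4(πλ_j)^2 · r · u · e^{−πλ_j u^2} · ( e^{−πλ_m κ^2 r^2} − e^{−πλ_m u^2} ) du dr = λ_m(2λ_j + λ_m)/(λ_j + λ_m)^2 − λ_m/(λ_m + λ_j κ^{−2}); equivalently, the left-hand side equals λ_j/(λ_j + κ^2 λ_m) − λ_j^2/(λ_j + λ_m)^2. (This is the closed form in Lemma 1 for Pr(X^{(j,m)}), j ≠ m, in the complementary regime κ = (t^{(m)}/t^{(j)})^{1/α} ≤ 1, where κ^{−2} = (t^{(j)}/t^{(m)})^{2/α}.) -/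

import Mathlib

open MeasureTheory Real Set Filter Topology
set_option maxHeartbeats 1000000

lemma tail_int (c r : ℝ) (hc : 0 < c) :
    ∫ u in Ioi r, u * Real.exp (-(c * u ^ 2)) = Real.exp (-(c * r ^ 2)) / (2 * c) := by
  have hderiv : ∀ u ∈ Ici r, HasDerivAt (fun u : ℝ => -(Real.exp (-(c * u ^ 2))) / (2 * c))
      (u * Real.exp (-(c * u ^ 2))) u := by
    intro u _
    have h1 : HasDerivAt (fun u : ℝ => -(c * u ^ 2)) (-(c * (2 * u))) u := by
      simpa using ((hasDerivAt_pow 2 u).const_mul c).fun_neg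
    have h2 := (h1.exp).fun_neg.div_const (2 * c)
    refine h2.congr_deriv ?_
    rw [div_eq_iff (by positivity)]
    ring
  have hint : IntegrableOn (fun u : ℝ => u * Real.exp (-(c * u ^ 2))) (Ioi r) := by
    have := integrable_mul_exp_neg_mul_sq hc
    simpa [neg_mul] using this.integrableOn
  have htend : Tendsto (fun u : ℝ => -(Real.exp (-(c * u ^ 2))) / (2 * c)) atTop (𝓝 0) := by
    have h0 : Tendsto (fun u : ℝ => c * u ^ 2) atTop atTop :=
      (tendsto_pow_atTop two_ne_zero).const_mul_atTop hc
    have h1 : Tendsto (fun u : ℝ => Real.exp (-(c * u ^ 2))) atTop (𝓝 0) :=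
      Real.tendsto_exp_atBot.comp (tendsto_neg_atBot_iff.mpr h0)
    simpa using (h1.neg.div_const (2 * c))
  have := integral_Ioi_of_hasDerivAt_of_tendsto' hderiv hint htend
  rw [this]
  field_simp
  ring

/-- Lemma 1 (case j ≠ m, κ = (t⁽ᵐ⁾/t⁽ʲ⁾)^{1/α} ≤ 1): closed form of
Pr(X^{(j,m)}) as an explicit double integral, in its two equivalent forms. -/
theorem stmt_1 (lj lm κ : ℝ) (hlj : 0 < lj) (hlm : 0 < lm)
    (hκ0 : 0 < κ) (hκ : κ ≤ 1) :
    (∫ r in Ioi (0:ℝ), ∫ u in Ioi r,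
      4 * (π * lj) ^ 2 * r * u * Real.exp (-(π * lj * u ^ 2)) *
        (Real.exp (-(π * lm * κ ^ 2 * r ^ 2)) - Real.exp (-(π * lm * u ^ 2))))
      = lm * (2 * lj + lm) / (lj + lm) ^ 2 - lm / (lm + lj * κ ^ (-2 : ℤ)) ∧
    (∫ r in Ioi (0:ℝ), ∫ u in Ioi r,
      4 * (π * lj) ^ 2 * r * u * Real.exp (-(π * lj * u ^ 2)) *
        (Real.exp (-(π * lm * κ ^ 2 * r ^ 2)) - Real.exp (-(π * lm * u ^ 2))))
      = lj / (lj + κ ^ 2 * lm) - lj ^ 2 / (lj + lm) ^ 2 := by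
  set a := π * lj with ha_def
  set b := π * lm with hb_def
  have ha : 0 < a := mul_pos pi_pos hlj
  have hb : 0 < b := mul_pos pi_pos hlm
  have hab : 0 < a + b := by linarith
  have hk2 : 0 < κ ^ 2 := pow_pos hκ0 2
  have habk : 0 < a + b * κ ^ 2 := by positivity
  -- inner integral computation (valid for every r)
  have hinner : ∀ r : ℝ,
      (∫ u in Ioi r, 4 * a ^ 2 * r * u * Real.exp (-(a * u ^ 2)) *
        (Real.exp (-(b * κ ^ 2 * r ^ 2)) - Real.exp (-(b * u ^ 2))))
      = (2 * a) * (r * Real.exp (-((a + b * κ ^ 2) * r ^ 2)))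
        - (2 * a ^ 2 / (a + b)) * (r * Real.exp (-((a + b) * r ^ 2))) := by
    intro r
    have heq : ∀ u : ℝ, 4 * a ^ 2 * r * u * Real.exp (-(a * u ^ 2)) *
        (Real.exp (-(b * κ ^ 2 * r ^ 2)) - Real.exp (-(b * u ^ 2)))
        = (4 * a ^ 2 * r * Real.exp (-(b * κ ^ 2 * r ^ 2))) * (u * Real.exp (-(a * u ^ 2)))
          - (4 * a ^ 2 * r) * (u * Real.exp (-((a + b) * u ^ 2))) := by
      intro u
      have : Real.exp (-(a * u ^ 2)) * Real.exp (-(b * u ^ 2))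
          = Real.exp (-((a + b) * u ^ 2)) := by
        rw [← Real.exp_add]; ring_nf
      rw [mul_sub, ← this]; ring
    have hint1 : IntegrableOn (fun u : ℝ => u * Real.exp (-(a * u ^ 2))) (Ioi r) := by
      have h := (integrable_mul_exp_neg_mul_sq ha).integrableOn (s := Ioi r) (μ := volume)
      simp_rw [neg_mul] at h
      exact h
    have hint2 : IntegrableOn (fun u : ℝ => u * Real.exp (-((a + b) * u ^ 2))) (Ioi r) := by
      have h := (integrable_mul_exp_neg_mul_sq hab).integrableOn (s := Ioi r) (μ := volume)
      simp_rw [neg_mul] at h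
      exact h
    calc (∫ u in Ioi r, 4 * a ^ 2 * r * u * Real.exp (-(a * u ^ 2)) *
        (Real.exp (-(b * κ ^ 2 * r ^ 2)) - Real.exp (-(b * u ^ 2))))
        = ∫ u in Ioi r,
          ((4 * a ^ 2 * r * Real.exp (-(b * κ ^ 2 * r ^ 2))) * (u * Real.exp (-(a * u ^ 2)))
          - (4 * a ^ 2 * r) * (u * Real.exp (-((a + b) * u ^ 2)))) := by
          exact integral_congr_ae (Filter.Eventually.of_forall fun u => heq u)
      _ = (4 * a ^ 2 * r * Real.exp (-(b * κ ^ 2 * r ^ 2))) *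
            (∫ u in Ioi r, u * Real.exp (-(a * u ^ 2)))
          - (4 * a ^ 2 * r) * (∫ u in Ioi r, u * Real.exp (-((a + b) * u ^ 2))) := by
          rw [integral_sub (hint1.const_mul _) (hint2.const_mul _),
            integral_const_mul, integral_const_mul]
      _ = (2 * a) * (r * Real.exp (-((a + b * κ ^ 2) * r ^ 2)))
          - (2 * a ^ 2 / (a + b)) * (r * Real.exp (-((a + b) * r ^ 2))) := by
          rw [tail_int a r ha, tail_int (a + b) r hab]
          have : Real.exp (-(b * κ ^ 2 * r ^ 2)) * Real.exp (-(a * r ^ 2))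
              = Real.exp (-((a + b * κ ^ 2) * r ^ 2)) := by
            rw [← Real.exp_add]; ring_nf
          rw [← this]
          field_simp
          ring
  have houter : (∫ r in Ioi (0:ℝ), ∫ u in Ioi r,
      4 * a ^ 2 * r * u * Real.exp (-(a * u ^ 2)) *
        (Real.exp (-(b * κ ^ 2 * r ^ 2)) - Real.exp (-(b * u ^ 2))))
      = a / (a + b * κ ^ 2) - a ^ 2 / (a + b) ^ 2 := by
    have h1 : IntegrableOn (fun r : ℝ => r * Real.exp (-((a + b * κ ^ 2) * r ^ 2)))
        (Ioi (0:ℝ)) := by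
      have h := (integrable_mul_exp_neg_mul_sq habk).integrableOn (s := Ioi (0:ℝ)) (μ := volume)
      simp_rw [neg_mul] at h
      exact h
    have h2 : IntegrableOn (fun r : ℝ => r * Real.exp (-((a + b) * r ^ 2))) (Ioi (0:ℝ)) := by
      have h := (integrable_mul_exp_neg_mul_sq hab).integrableOn (s := Ioi (0:ℝ)) (μ := volume)
      simp_rw [neg_mul] at h
      exact h
    rw [integral_congr_ae (Filter.Eventually.of_forall hinner),
      integral_sub (h1.const_mul _) (h2.const_mul _), integral_const_mul, integral_const_mul,
      tail_int (a + b * κ ^ 2) 0 habk, tail_int (a + b) 0 hab]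
    norm_num
    field_simp
  -- translate to the required forms
  have hform2 : a / (a + b * κ ^ 2) - a ^ 2 / (a + b) ^ 2
      = lj / (lj + κ ^ 2 * lm) - lj ^ 2 / (lj + lm) ^ 2 := by
    rw [ha_def, hb_def]
    have h1 : 0 < lj + κ ^ 2 * lm := by positivity
    have h2 : 0 < lj + lm := by linarith
    have hπ := pi_pos
    field_simp
  have hκne : κ ≠ 0 := ne_of_gt hκ0
  have hform1 : lj / (lj + κ ^ 2 * lm) - lj ^ 2 / (lj + lm) ^ 2
      = lm * (2 * lj + lm) / (lj + lm) ^ 2 - lm / (lm + lj * κ ^ (-2 : ℤ)) := by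
    have hz : κ ^ (-2 : ℤ) = (κ ^ 2)⁻¹ := by
      rw [zpow_neg, zpow_two, pow_two]
    rw [hz]
    have h1 : 0 < lj + κ ^ 2 * lm := by positivity
    have h2 : 0 < lj + lm := by linarith
    have h3 : lm + lj * (κ ^ 2)⁻¹ = (lm * κ ^ 2 + lj) / κ ^ 2 := by
      field_simp
      all_goals rfl
    rw [h3]
    rw [div_div_eq_mul_div]
    have h4 : 0 < lm * κ ^ 2 + lj := by positivity
    field_simp
    all_goals ring
  constructor
  · rw [houter, hform2, hform1]
  · rw [houter, hform2]
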